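/- If f is a {g,h}-derivation on an algebra A, then the sequences f_n = f^n/n!, g_n = g^n/n!, h_n = h^n/n! (with f_0 = g_0 = h_0 = I) form a higher {g_n,h_n}-derivation; that is, f_n(ab) = \sum_{k=0}^{n} g_{n-k}(a) h_k(b) = \sum_{k=0}^{n} h_{n-k}(a) g_k(b) for all a, b \in A and all non-negative integers n. -/

import Mathlib

lemma gh_leibniz {K A : Type*} [Field K] [Ring A] [Algebra K A]
    (f g h : Module.End K A)
    (H : ∀ a b : A, f (a * b) = g a * b + a * h b) (n : ℕ) (a b : A) :
    (f ^ n) (a * b) =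
      ∑ k ∈ Finset.range (n + 1), n.choose k • ((g ^ (n - k)) a * (h ^ k) b) := by
  induction n with
  | zero => simp
  | succ n ih =>
    have step : (f ^ (n + 1)) (a * b) =
        (∑ k ∈ Finset.range (n + 1), n.choose k • ((g ^ (n + 1 - k)) a * (h ^ k) b)) +
        ∑ k ∈ Finset.range (n + 1), n.choose k • ((g ^ (n - k)) a * (h ^ (k + 1)) b) := by
      rw [pow_succ', Module.End.mul_apply, ih, map_sum, ← Finset.sum_add_distrib]
      refine Finset.sum_congr rfl fun k hk => ?_
      have hk' : k ≤ n := Nat.lt_succ_iff.mp (Finset.mem_range.mp hk)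
      rw [map_nsmul, H, ← smul_add]
      congr 2
      · rw [show n + 1 - k = (n - k) + 1 by omega, pow_succ', Module.End.mul_apply]
      · rw [pow_succ', Module.End.mul_apply]
    rw [step]
    rw [Finset.sum_range_succ' (fun k => (n + 1).choose k • ((g ^ (n + 1 - k)) a * (h ^ k) b))]
    have pascal : ∀ k ∈ Finset.range (n + 1),
        (n + 1).choose (k + 1) • ((g ^ (n + 1 - (k + 1))) a * (h ^ (k + 1)) b) =
        n.choose (k + 1) • ((g ^ (n - k)) a * (h ^ (k + 1)) b) +
        n.choose k • ((g ^ (n - k)) a * (h ^ (k + 1)) b) := by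
      intro k hk
      rw [Nat.choose_succ_succ, add_smul, show n + 1 - (k + 1) = n - k by omega, add_comm]
    rw [Finset.sum_congr rfl pascal, Finset.sum_add_distrib]
    have e1 : (∑ k ∈ Finset.range (n + 1),
        n.choose (k + 1) • ((g ^ (n - k)) a * (h ^ (k + 1)) b)) +
        (n + 1).choose 0 • ((g ^ (n + 1 - 0)) a * (h ^ 0) b) =
        ∑ k ∈ Finset.range (n + 1), n.choose k • ((g ^ (n + 1 - k)) a * (h ^ k) b) := by
      rw [Finset.sum_range_succ, Nat.choose_succ_self, zero_smul, add_zero,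
        Finset.sum_range_succ' (fun k => n.choose k • ((g ^ (n + 1 - k)) a * (h ^ k) b))]
      simp [Nat.succ_sub_succ]
    rw [add_right_comm, e1, add_comm]

lemma gh_fact_inv {K : Type*} [Field K] [CharZero K] {n k : ℕ} (hk : k ≤ n) :
    ((n.factorial : K))⁻¹ * (n.choose k : K) =
      (((n - k).factorial : K))⁻¹ * ((k.factorial : K))⁻¹ := by
  have hfact : (n.choose k : K) * (k.factorial : K) * ((n - k).factorial : K) =
      (n.factorial : K) := by
    exact_mod_cast congrArg (Nat.cast : ℕ → K) (Nat.choose_mul_factorial_mul_factorial hk)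
  have h1 : (n.factorial : K) ≠ 0 := Nat.cast_ne_zero.mpr n.factorial_ne_zero
  have h2 : (k.factorial : K) ≠ 0 := Nat.cast_ne_zero.mpr k.factorial_ne_zero
  have h3 : ((n - k).factorial : K) ≠ 0 := Nat.cast_ne_zero.mpr (n - k).factorial_ne_zero
  field_simp
  linear_combination hfact

lemma gh_half {K A : Type*} [Field K] [CharZero K] [Ring A] [Algebra K A]
    (f g h : Module.End K A)
    (H : ∀ a b : A, f (a * b) = g a * b + a * h b) (n : ℕ) (a b : A) :
    ((n.factorial : K)⁻¹ • f ^ n) (a * b) =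
      ∑ k ∈ Finset.range (n + 1),
        (((n - k).factorial : K)⁻¹ • g ^ (n - k)) a * ((k.factorial : K)⁻¹ • h ^ k) b := by
  rw [LinearMap.smul_apply, gh_leibniz f g h H, Finset.smul_sum]
  refine Finset.sum_congr rfl fun k hk => ?_
  have hk' : k ≤ n := Nat.lt_succ_iff.mp (Finset.mem_range.mp hk)
  rw [LinearMap.smul_apply, LinearMap.smul_apply, smul_mul_assoc, mul_smul_comm,
    ← Nat.cast_smul_eq_nsmul K, smul_smul, smul_smul, gh_fact_inv hk']

/-- If `f` is a `{g,h}`-derivation then `fₙ = fⁿ/n!`, `gₙ = gⁿ/n!`, `hₙ = hⁿ/n!`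
form a higher `{gₙ,hₙ}`-derivation. -/
theorem ordinary_higher_gh_derivation
    {K A : Type*} [Field K] [CharZero K] [Ring A] [Algebra K A]
    (f g h : Module.End K A)
    (hgh : ∀ a b : A, f (a * b) = g a * b + a * h b ∧ f (a * b) = h a * b + a * g b) :
    ∀ (n : ℕ) (a b : A),
      ((n.factorial : K)⁻¹ • f ^ n) (a * b) =
        ∑ k ∈ Finset.range (n + 1),
          (((n - k).factorial : K)⁻¹ • g ^ (n - k)) a * ((k.factorial : K)⁻¹ • h ^ k) b ∧
      ((n.factorial : K)⁻¹ • f ^ n) (a * b) =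
        ∑ k ∈ Finset.range (n + 1),
          (((n - k).factorial : K)⁻¹ • h ^ (n - k)) a * ((k.factorial : K)⁻¹ • g ^ k) b := by
  intro n a b
  exact ⟨gh_half f g h (fun a b => (hgh a b).1) n a b,
    gh_half f h g (fun a b => (hgh a b).2) n a b⟩
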